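/- Let d ≥ 3 and let Λ be a finite set of pairwise distinct unit vectors in ℝ^d, each having all coordinates rational. Let n be a positive integer. Then there exist points α_ξ ∈ ℝ^d for ξ ∈ Λ and a radius ρ > 0 such that for all ξ, ξ' ∈ Λ with ξ ≠ ξ', the sets (B_ρ(α_ξ) + {s ξ : s ∈ ℝ} + (2π/n)ℤ^d) and (B_ρ(α_{ξ'}) + {s ξ' : s ∈ ℝ} + (2π/n)ℤ^d) are disjoint, where B_ρ(α) is the open Euclidean ball of radius ρ centered at α and the sums are Minkowski sums of subsets of ℝ^d. -/

import Mathlib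

open scoped BigOperators Pointwise
open MeasureTheory

noncomputable section DSLAux

/-- The linear functional `x ↦ ∑ i, w i * x i` as a plain function. -/
def dslPhi {d : ℕ} (w : Fin d → ℤ) (x : EuclideanSpace ℝ (Fin d)) : ℝ :=
  ∑ i, (w i : ℝ) * x i

lemma dslPhi_add {d : ℕ} (w : Fin d → ℤ) (x y : EuclideanSpace ℝ (Fin d)) :
    dslPhi w (x + y) = dslPhi w x + dslPhi w y := by
  simp [dslPhi, mul_add, Finset.sum_add_distrib]

lemma dslPhi_sub {d : ℕ} (w : Fin d → ℤ) (x y : EuclideanSpace ℝ (Fin d)) :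
    dslPhi w (x - y) = dslPhi w x - dslPhi w y := by
  simp [dslPhi, mul_sub, Finset.sum_sub_distrib]

lemma dslPhi_smul {d : ℕ} (w : Fin d → ℤ) (s : ℝ) (x : EuclideanSpace ℝ (Fin d)) :
    dslPhi w (s • x) = s * dslPhi w x := by
  simp only [dslPhi, Finset.mul_sum, PiLp.smul_apply, smul_eq_mul]
  exact Finset.sum_congr rfl fun i _ => by ring

lemma dslPhi_abs_le {d : ℕ} (w : Fin d → ℤ) (x : EuclideanSpace ℝ (Fin d)) :
    |dslPhi w x| ≤ (∑ i, |(w i : ℝ)|) * ‖x‖ := by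
  calc |dslPhi w x| ≤ ∑ i, |(w i : ℝ) * x i| := Finset.abs_sum_le_sum_abs _ _
    _ ≤ ∑ i, |(w i : ℝ)| * ‖x‖ := by
        refine Finset.sum_le_sum fun i _ => ?_
        rw [abs_mul]
        refine mul_le_mul_of_nonneg_left ?_ (abs_nonneg _)
        rw [EuclideanSpace.norm_eq, ← Real.sqrt_sq_eq_abs]
        refine Real.sqrt_le_sqrt ?_
        have : x i ^ 2 = ‖x i‖ ^ 2 := by rw [Real.norm_eq_abs, sq_abs]
        rw [this]
        exact Finset.single_le_sum (fun j _ => sq_nonneg ‖x j‖) (Finset.mem_univ i)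
    _ = (∑ i, |(w i : ℝ)|) * ‖x‖ := (Finset.sum_mul _ _ _).symm

/-- Level sets of a nonzero integer functional have measure zero. -/
lemma dslLevel_null {d : ℕ} (w : Fin d → ℤ) (hw : w ≠ 0) (t : ℝ) :
    volume {x : EuclideanSpace ℝ (Fin d) | dslPhi w x = t} = 0 := by
  obtain ⟨i₀, hi₀⟩ : ∃ i, w i ≠ 0 := by
    by_contra h; push_neg at h; exact hw (funext h)
  set L : EuclideanSpace ℝ (Fin d) →L[ℝ] ℝ :=
    ∑ i, (w i : ℝ) • (EuclideanSpace.proj i : EuclideanSpace ℝ (Fin d) →L[ℝ] ℝ) with hL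
  have hLapp : ∀ x, L x = dslPhi w x := by
    intro x
    simp [hL, dslPhi, ContinuousLinearMap.sum_apply]
  have hker : LinearMap.ker (L : EuclideanSpace ℝ (Fin d) →ₗ[ℝ] ℝ) ≠ ⊤ := by
    intro h
    have h1 : L (EuclideanSpace.single i₀ (1:ℝ)) = 0 := by
      have h2 := LinearMap.ker_eq_top.mp h
      have h3 : (L : EuclideanSpace ℝ (Fin d) →ₗ[ℝ] ℝ) (EuclideanSpace.single i₀ (1:ℝ)) = 0 := by
        rw [h2]; rfl
      simpa using h3
    rw [hLapp] at h1
    simp only [dslPhi] at h1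
    rw [Finset.sum_eq_single i₀] at h1
    · simp at h1; exact hi₀ h1
    · intro j _ hj; simp [EuclideanSpace.single_apply, hj]
    · simp
  set x₀ : EuclideanSpace ℝ (Fin d) := (t / (w i₀ : ℝ)) • EuclideanSpace.single i₀ (1:ℝ) with hx₀
  have hLx₀ : L x₀ = t := by
    rw [hLapp]
    simp only [dslPhi, hx₀, PiLp.smul_apply, smul_eq_mul]
    rw [Finset.sum_eq_single i₀]
    · simp only [EuclideanSpace.single_apply, if_pos rfl, ↓reduceIte]
      field_simp
    · intro j _ hj; simp [EuclideanSpace.single_apply, hj]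
    · simp
  have hset : {x : EuclideanSpace ℝ (Fin d) | dslPhi w x = t}
      = (fun y => y + x₀) '' (LinearMap.ker (L : EuclideanSpace ℝ (Fin d) →ₗ[ℝ] ℝ) : Set _) := by
    ext x
    simp only [Set.mem_setOf_eq, Set.image_add_right, Set.mem_preimage, SetLike.mem_coe,
      LinearMap.mem_ker]
    constructor
    · intro hx
      have : L (x + -x₀) = 0 := by
        rw [map_add, map_neg, hLx₀, hLapp, hx]; ring
      simpa using this
    · intro hx
      have h4 : L (x + -x₀) = 0 := by simpa using hx
      rw [map_add, map_neg, hLx₀] at h4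
      rw [← hLapp]
      linarith [h4]
  rw [hset, Set.image_add_right, measure_preimage_add_right]
  exact Measure.addHaar_submodule volume _ hker

/-- Avoiding finitely many null sets. -/
lemma dslAvoid {d : ℕ} (s : Finset (EuclideanSpace ℝ (Fin d)))
    (F : EuclideanSpace ℝ (Fin d) → Set (EuclideanSpace ℝ (Fin d)))
    (hF : ∀ ξ ∈ s, volume (F ξ) = 0) :
    ∃ β : EuclideanSpace ℝ (Fin d), ∀ ξ ∈ s, β ∉ F ξ := by
  have hU : volume (⋃ ξ ∈ s, F ξ) = 0 :=
    (measure_biUnion_null_iff s.countable_toSet).mpr hF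
  have hne : (⋃ ξ ∈ s, F ξ) ≠ Set.univ := by
    intro h
    rw [h] at hU
    exact isOpen_univ.measure_ne_zero volume Set.univ_nonempty hU
  obtain ⟨β, hβ⟩ := Set.ne_univ_iff_exists_notMem _ |>.mp hne
  exact ⟨β, by simpa using hβ⟩

/-- A nonzero integer vector orthogonal to two rational vectors, when `d ≥ 3`. -/
lemma dslW {d : ℕ} (hd : 3 ≤ d) (ξ ξ' : EuclideanSpace ℝ (Fin d))
    (hq : ∀ i, ∃ q : ℚ, ξ i = (q : ℝ)) (hq' : ∀ i, ∃ q : ℚ, ξ' i = (q : ℝ)) :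
    ∃ w : Fin d → ℤ, w ≠ 0 ∧ (∑ i, (w i : ℝ) * ξ i) = 0 ∧ (∑ i, (w i : ℝ) * ξ' i) = 0 := by
  classical
  choose q hqe using hq
  choose q' hqe' using hq'
  set f : (Fin d → ℚ) →ₗ[ℚ] ℚ := ∑ i, q i • LinearMap.proj i with hfdef
  set g : (Fin d → ℚ) →ₗ[ℚ] ℚ := ∑ i, q' i • LinearMap.proj i with hgdef
  have happ : ∀ (h : Fin d → ℚ) (v : Fin d → ℚ),
      (∑ i, h i • (LinearMap.proj i : (Fin d → ℚ) →ₗ[ℚ] ℚ)) v = ∑ i, h i * v i := by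
    intro h v
    simp [LinearMap.sum_apply]
  have hK : LinearMap.ker f ⊓ LinearMap.ker g ≠ ⊥ := by
    intro hbot
    have h1 := LinearMap.finrank_range_add_finrank_ker f
    have h2 := LinearMap.finrank_range_add_finrank_ker g
    have h3 := Submodule.finrank_sup_add_finrank_inf_eq (LinearMap.ker f) (LinearMap.ker g)
    have h4 : Module.finrank ℚ (Fin d → ℚ) = d := Module.finrank_fin_fun ℚ
    have h5 : Module.finrank ℚ (LinearMap.range f) ≤ 1 := by
      have := Submodule.finrank_le (LinearMap.range f)
      simpa using this
    have h6 : Module.finrank ℚ (LinearMap.range g) ≤ 1 := by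
      have := Submodule.finrank_le (LinearMap.range g)
      simpa using this
    have h7 : Module.finrank ℚ ↥(LinearMap.ker f ⊔ LinearMap.ker g) ≤ d := by
      have := Submodule.finrank_le (LinearMap.ker f ⊔ LinearMap.ker g)
      simpa [h4] using this
    have h8 : Module.finrank ℚ ↥(LinearMap.ker f ⊓ LinearMap.ker g) = 0 := by
      rw [hbot]; exact finrank_bot ℚ _
    rw [h4] at h1 h2
    omega
  obtain ⟨v, hv, hv0⟩ := Submodule.exists_mem_ne_zero_of_ne_bot hK
  have hvf : ∑ i, q i * v i = 0 := by
    have := (Submodule.mem_inf.mp hv).1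
    rw [LinearMap.mem_ker] at this
    rw [hfdef] at this
    rw [happ] at this
    exact this
  have hvg : ∑ i, q' i * v i = 0 := by
    have := (Submodule.mem_inf.mp hv).2
    rw [LinearMap.mem_ker] at this
    rw [hgdef] at this
    rw [happ] at this
    exact this
  set N : ℕ := ∏ i, (v i).den with hNdef
  have hNne : (N : ℚ) ≠ 0 := by
    have : N ≠ 0 := Finset.prod_ne_zero_iff.mpr fun i _ => (v i).den_nz
    exact_mod_cast this
  have hint : ∀ i, ∃ m : ℤ, (v i) * N = (m : ℚ) := by
    intro i
    obtain ⟨t, ht⟩ : ((v i).den : ℕ) ∣ N := Finset.dvd_prod_of_mem _ (Finset.mem_univ i)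
    refine ⟨(v i).num * t, ?_⟩
    have : (N : ℚ) = ((v i).den : ℚ) * t := by rw [ht]; push_cast; ring
    rw [this, ← mul_assoc, Rat.mul_den_eq_num]
    push_cast; ring
  choose m hm using hint
  refine ⟨m, ?_, ?_, ?_⟩
  · intro hm0
    obtain ⟨i, hi⟩ : ∃ i, v i ≠ 0 := by
      by_contra h; push_neg at h; exact hv0 (funext h)
    have h9 : m i = 0 := congrFun hm0 i
    have h10 : (v i) * N = 0 := by rw [hm i, h9]; simp
    rcases mul_eq_zero.mp h10 with h | h
    · exact hi h
    · exact hNne h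
  · have key : (∑ i, (m i : ℚ) * q i) = 0 := by
      have h1 : ∑ i, (m i : ℚ) * q i = N * ∑ i, q i * v i := by
        rw [Finset.mul_sum]
        refine Finset.sum_congr rfl fun i _ => ?_
        rw [← hm i]; ring
      rw [h1, hvf, mul_zero]
    have h2 : ∑ i, (m i : ℝ) * ξ i = ((∑ i, (m i : ℚ) * q i : ℚ) : ℝ) := by
      push_cast
      exact Finset.sum_congr rfl fun i _ => by rw [hqe i]
    rw [h2, key]; simp
  · have key : (∑ i, (m i : ℚ) * q' i) = 0 := by
      have h1 : ∑ i, (m i : ℚ) * q' i = N * ∑ i, q' i * v i := by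
        rw [Finset.mul_sum]
        refine Finset.sum_congr rfl fun i _ => ?_
        rw [← hm i]; ring
      rw [h1, hvg, mul_zero]
    have h2 : ∑ i, (m i : ℝ) * ξ' i = ((∑ i, (m i : ℚ) * q' i : ℚ) : ℝ) := by
      push_cast
      exact Finset.sum_congr rfl fun i _ => by rw [hqe' i]
    rw [h2, key]; simp

lemma dslDelta (c : ℝ) (hc : 0 < c) (r : ℝ) (hr : ∀ k : ℤ, r ≠ c * k) :
    ∃ δ : ℝ, 0 < δ ∧ ∀ k : ℤ, δ ≤ |r - c * k| := by
  set x : ℝ := r / c with hx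
  set f : ℝ := Int.fract x with hfd
  have hfx : f = x - ⌊x⌋ := (Int.self_sub_floor x).symm
  have hf0 : 0 < f := by
    rcases lt_or_eq_of_le (Int.fract_nonneg x) with h | h
    · exact h
    · exfalso
      apply hr ⌊x⌋
      have hf0' : f = 0 := by rw [hfd, ← h]
      have hxf : x = (⌊x⌋ : ℝ) := by linarith [hfx, hf0']
      have : r / c = (⌊x⌋ : ℝ) := by rw [← hx]; exact hxf
      field_simp at this
      linarith
  have hf1 : f < 1 := Int.fract_lt_one x
  have hmin : 0 < min f (1 - f) := lt_min hf0 (by linarith)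
  refine ⟨c * min f (1 - f), mul_pos hc hmin, ?_⟩
  intro k
  have hrck : r - c * k = c * (x - k) := by
    rw [hx]; field_simp
  rw [hrck, abs_mul, abs_of_pos hc]
  refine mul_le_mul_of_nonneg_left ?_ hc.le
  rcases le_or_gt (k : ℝ) (⌊x⌋ : ℝ) with h | h
  · have : f ≤ x - k := by rw [hfx]; linarith
    calc min f (1 - f) ≤ f := min_le_left _ _
      _ ≤ x - k := this
      _ ≤ |x - k| := le_abs_self _
  · have hk : (⌊x⌋ : ℝ) + 1 ≤ k := by exact_mod_cast Int.add_one_le_iff.mpr (by exact_mod_cast h)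
    have : 1 - f ≤ k - x := by rw [hfx] at *; linarith
    calc min f (1 - f) ≤ 1 - f := min_le_right _ _
      _ ≤ k - x := this
      _ ≤ |x - k| := by rw [abs_sub_comm]; exact le_abs_self _

/-- Choice of the shifts by induction, avoiding countably many hyperplanes. -/
lemma dslAlpha {d : ℕ} (c : ℝ)
    (w : EuclideanSpace ℝ (Fin d) → EuclideanSpace ℝ (Fin d) → Fin d → ℤ)
    (s : Finset (EuclideanSpace ℝ (Fin d)))
    (hw : ∀ ξ ∈ s, ∀ ξ' ∈ s, ξ ≠ ξ' → w ξ ξ' ≠ 0) :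
    ∃ α : EuclideanSpace ℝ (Fin d) → EuclideanSpace ℝ (Fin d),
      ∀ ξ ∈ s, ∀ ξ' ∈ s, ξ ≠ ξ' → ∀ k : ℤ,
        dslPhi (w ξ ξ') (α ξ - α ξ') ≠ c * k := by
  classical
  induction s using Finset.induction_on with
  | empty => exact ⟨fun _ => 0, by simp⟩
  | @insert a s ha ih =>
    obtain ⟨α, hα⟩ := ih fun ξ hξ ξ' hξ' hne =>
      hw ξ (Finset.mem_insert_of_mem hξ) ξ' (Finset.mem_insert_of_mem hξ') hne
    set F : EuclideanSpace ℝ (Fin d) → Set (EuclideanSpace ℝ (Fin d)) := fun ξ =>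
      (⋃ k : ℤ, {x | dslPhi (w a ξ) x = c * k + dslPhi (w a ξ) (α ξ)}) ∪
      (⋃ k : ℤ, {x | dslPhi (w ξ a) x = dslPhi (w ξ a) (α ξ) - c * k}) with hF
    have hFnull : ∀ ξ ∈ s, volume (F ξ) = 0 := by
      intro ξ hξ
      have haξ : a ≠ ξ := fun h => ha (h ▸ hξ)
      refine measure_union_null ?_ ?_
      · exact measure_iUnion_null fun k => dslLevel_null _
          (hw a (Finset.mem_insert_self a s) ξ (Finset.mem_insert_of_mem hξ) haξ) _
      · exact measure_iUnion_null fun k => dslLevel_null _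
          (hw ξ (Finset.mem_insert_of_mem hξ) a (Finset.mem_insert_self a s) haξ.symm) _
    obtain ⟨β, hβ⟩ := dslAvoid s F hFnull
    refine ⟨Function.update α a β, ?_⟩
    intro ξ hξ ξ' hξ' hne k
    rcases Finset.mem_insert.mp hξ with rfl | hξs
    · rcases Finset.mem_insert.mp hξ' with rfl | hξ's
      · exact absurd rfl hne
      · have hne' : ξ' ≠ ξ := fun h => ha (h ▸ hξ's)
        rw [Function.update_self, Function.update_of_ne hne']
        intro h
        apply hβ ξ' hξ's
        rw [hF]
        refine Set.mem_union_left _ (Set.mem_iUnion.mpr ⟨k, ?_⟩)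
        simp only [Set.mem_setOf_eq]
        rw [dslPhi_sub] at h
        linarith
    · rcases Finset.mem_insert.mp hξ' with rfl | hξ's
      · have hne'' : ξ ≠ ξ' := fun h => ha (h ▸ hξs)
        rw [Function.update_self, Function.update_of_ne hne'']
        intro h
        apply hβ ξ hξs
        rw [hF]
        refine Set.mem_union_right _ (Set.mem_iUnion.mpr ⟨k, ?_⟩)
        simp only [Set.mem_setOf_eq]
        rw [dslPhi_sub] at h
        linarith
      · have h1 : ξ ≠ a := fun h => ha (h ▸ hξs)
        have h2 : ξ' ≠ a := fun h => ha (h ▸ hξ's)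
        rw [Function.update_of_ne h1, Function.update_of_ne h2]
        exact hα ξ hξs ξ' hξ's hne k

end DSLAux

/-- Disjoint-supports lemma for the intermittent jets: for a finite set of distinct
rational unit directions `ξ` in `ℝ^d` (`d ≥ 3`) and a lattice spacing `2π/n`, there
are shifts `α_ξ` and a radius `ρ > 0` such that the thickened periodized lines
`B_ρ(α_ξ) + ℝξ + (2π/n)ℤ^d` associated to distinct directions are disjoint. -/
theorem disjoint_supports_lemma (d : ℕ) (hd : 3 ≤ d)
    (Λ : Finset (EuclideanSpace ℝ (Fin d)))
    (hΛ : ∀ ξ ∈ Λ, ‖ξ‖ = 1 ∧ ∀ i, ∃ q : ℚ, ξ i = (q : ℝ))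
    (n : ℕ) (hn : 0 < n) :
    ∃ (α : EuclideanSpace ℝ (Fin d) → EuclideanSpace ℝ (Fin d)) (ρ : ℝ), 0 < ρ ∧
      ∀ ξ ∈ Λ, ∀ ξ' ∈ Λ, ξ ≠ ξ' →
        Disjoint
          (Metric.ball (α ξ) ρ + {y : EuclideanSpace ℝ (Fin d) | ∃ s : ℝ, y = s • ξ}
            + {y : EuclideanSpace ℝ (Fin d) | ∀ i, ∃ k : ℤ, y i = 2 * Real.pi / n * k})
          (Metric.ball (α ξ') ρ + {y : EuclideanSpace ℝ (Fin d) | ∃ s : ℝ, y = s • ξ'}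
            + {y : EuclideanSpace ℝ (Fin d) | ∀ i, ∃ k : ℤ, y i = 2 * Real.pi / n * k}) := by
  classical
  set c : ℝ := 2 * Real.pi / n with hcdef
  have hnpos : (0:ℝ) < n := by exact_mod_cast hn
  have hc : 0 < c := by
    have := Real.pi_pos
    positivity
  have hWex : ∀ ξ ∈ Λ, ∀ ξ' ∈ Λ, ∃ w : Fin d → ℤ, w ≠ 0 ∧ (∑ i, (w i : ℝ) * ξ i) = 0 ∧
      (∑ i, (w i : ℝ) * ξ' i) = 0 :=
    fun ξ hξ ξ' hξ' => dslW hd ξ ξ' (hΛ ξ hξ).2 (hΛ ξ' hξ').2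
  choose! W hW0 hW1 hW2 using hWex
  obtain ⟨α, hα⟩ := dslAlpha c W Λ fun ξ hξ ξ' hξ' _ => hW0 ξ hξ ξ' hξ'
  have hδex : ∀ ξ ∈ Λ, ∀ ξ' ∈ Λ, ξ ≠ ξ' → ∃ δ : ℝ, 0 < δ ∧
      ∀ k : ℤ, δ ≤ |dslPhi (W ξ ξ') (α ξ - α ξ') - c * k| :=
    fun ξ hξ ξ' hξ' hne => dslDelta c hc _ (hα ξ hξ ξ' hξ' hne)
  choose! δ hδ0 hδ1 using hδex
  set Wsum : EuclideanSpace ℝ (Fin d) → EuclideanSpace ℝ (Fin d) → ℝ :=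
    fun ξ ξ' => ∑ i, |(W ξ ξ' i : ℝ)| with hWsumdef
  have hWsum_nonneg : ∀ ξ ξ', 0 ≤ Wsum ξ ξ' :=
    fun ξ ξ' => Finset.sum_nonneg fun i _ => abs_nonneg _
  set P : Finset (EuclideanSpace ℝ (Fin d) × EuclideanSpace ℝ (Fin d)) :=
    (Λ ×ˢ Λ).filter fun p => p.1 ≠ p.2 with hPdef
  set T : Finset ℝ :=
    insert 1 (P.image fun p => δ p.1 p.2 / (2 * Wsum p.1 p.2 + 1)) with hTdef
  have hTne : T.Nonempty := ⟨1, Finset.mem_insert_self _ _⟩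
  set ρ := T.min' hTne with hρdef
  have hρpos : 0 < ρ := by
    rw [hρdef, Finset.lt_min'_iff]
    intro y hy
    rw [hTdef] at hy
    rcases Finset.mem_insert.mp hy with rfl | hy
    · norm_num
    · obtain ⟨p, hp, rfl⟩ := Finset.mem_image.mp hy
      obtain ⟨hpΛ, hpne⟩ := Finset.mem_filter.mp hp
      obtain ⟨hp1, hp2⟩ := Finset.mem_product.mp hpΛ
      have hδp := hδ0 p.1 hp1 p.2 hp2 hpne
      have := hWsum_nonneg p.1 p.2
      positivity
  refine ⟨α, ρ, hρpos, ?_⟩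
  intro ξ hξ ξ' hξ' hne
  have hρle : ρ ≤ δ ξ ξ' / (2 * Wsum ξ ξ' + 1) := by
    refine Finset.min'_le _ _ ?_
    rw [hTdef]
    refine Finset.mem_insert_of_mem (Finset.mem_image.mpr ⟨(ξ, ξ'), ?_, rfl⟩)
    exact Finset.mem_filter.mpr ⟨Finset.mem_product.mpr ⟨hξ, hξ'⟩, hne⟩
  rw [Set.disjoint_left]
  rintro x hx hx'
  obtain ⟨y, hy, z, hz, hxyz⟩ := Set.mem_add.mp hx
  obtain ⟨u, hu, v, hv, hyuv⟩ := Set.mem_add.mp hy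
  obtain ⟨s, hs⟩ := hv
  obtain ⟨y', hy', z', hz', hxyz'⟩ := Set.mem_add.mp hx'
  obtain ⟨u', hu', v', hv', hyuv'⟩ := Set.mem_add.mp hy'
  obtain ⟨s', hs'⟩ := hv'
  simp only [Set.mem_setOf_eq] at hz hz'
  choose kz hkz using hz
  choose kz' hkz' using hz'
  set w := W ξ ξ' with hwdef
  have hphiz : dslPhi w z = c * ((∑ i, w i * kz i : ℤ) : ℝ) := by
    simp only [dslPhi]
    push_cast
    rw [Finset.mul_sum]
    refine Finset.sum_congr rfl fun i _ => ?_
    rw [hkz i]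
    ring
  have hphiz' : dslPhi w z' = c * ((∑ i, w i * kz' i : ℤ) : ℝ) := by
    simp only [dslPhi]
    push_cast
    rw [Finset.mul_sum]
    refine Finset.sum_congr rfl fun i _ => ?_
    rw [hkz' i]
    ring
  have hphiξ : dslPhi w ξ = 0 := hW1 ξ hξ ξ' hξ'
  have hphiξ' : dslPhi w ξ' = 0 := hW2 ξ hξ ξ' hξ'
  set K : ℤ := ∑ i, w i * kz i with hK
  set K' : ℤ := ∑ i, w i * kz' i with hK'
  have e1 : dslPhi w x = dslPhi w u + c * (K : ℝ) := by
    rw [← hxyz, ← hyuv, hs]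
    rw [dslPhi_add, dslPhi_add, dslPhi_smul, hphiξ, hphiz]
    ring
  have e2 : dslPhi w x = dslPhi w u' + c * (K' : ℝ) := by
    rw [← hxyz', ← hyuv', hs']
    rw [dslPhi_add, dslPhi_add, dslPhi_smul, hphiξ', hphiz']
    ring
  have hub : ‖u - α ξ‖ < ρ := by
    rw [← dist_eq_norm]
    exact Metric.mem_ball.mp hu
  have hub' : ‖u' - α ξ'‖ < ρ := by
    rw [← dist_eq_norm]
    exact Metric.mem_ball.mp hu'
  have hb1 : |dslPhi w (u - α ξ)| ≤ Wsum ξ ξ' * ρ := by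
    refine (dslPhi_abs_le w _).trans ?_
    exact mul_le_mul_of_nonneg_left hub.le (hWsum_nonneg ξ ξ')
  have hb2 : |dslPhi w (u' - α ξ')| ≤ Wsum ξ ξ' * ρ := by
    refine (dslPhi_abs_le w _).trans ?_
    exact mul_le_mul_of_nonneg_left hub'.le (hWsum_nonneg ξ ξ')
  have hkey : dslPhi w (α ξ - α ξ') - c * ((K' - K : ℤ) : ℝ)
      = dslPhi w (u' - α ξ') - dslPhi w (u - α ξ) := by
    rw [dslPhi_sub, dslPhi_sub, dslPhi_sub]
    push_cast
    have := e1.symm.trans e2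
    linarith
  have hδle := hδ1 ξ hξ ξ' hξ' hne (K' - K)
  rw [hkey] at hδle
  have habs : |dslPhi w (u' - α ξ') - dslPhi w (u - α ξ)| ≤ 2 * Wsum ξ ξ' * ρ := by
    calc |dslPhi w (u' - α ξ') - dslPhi w (u - α ξ)|
        ≤ |dslPhi w (u' - α ξ')| + |dslPhi w (u - α ξ)| := abs_sub _ _
      _ ≤ Wsum ξ ξ' * ρ + Wsum ξ ξ' * ρ := add_le_add hb2 hb1
      _ = 2 * Wsum ξ ξ' * ρ := by ring
  have hfinal : δ ξ ξ' ≤ 2 * Wsum ξ ξ' * ρ := le_trans hδle habs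
  have hρprod : ρ * (2 * Wsum ξ ξ' + 1) ≤ δ ξ ξ' := by
    have hpos : (0:ℝ) < 2 * Wsum ξ ξ' + 1 := by
      have := hWsum_nonneg ξ ξ'; linarith
    calc ρ * (2 * Wsum ξ ξ' + 1) ≤ (δ ξ ξ' / (2 * Wsum ξ ξ' + 1)) * (2 * Wsum ξ ξ' + 1) :=
          mul_le_mul_of_nonneg_right hρle hpos.le
      _ = δ ξ ξ' := by field_simp
  nlinarith [hρpos]
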